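/- Let Γ be a finite connected simple graph with Laplacian 𝓛. For any ordering (x_1, ..., x_N) of the vertices, the product over m = 1,...,N−1 of the (x_{m+1}, x_{m+1}) entry of (𝓛^{{x_1,...,x_m}})^{-1} equals 1/det(𝓛^{{x_1}}) = N/Π_𝓛, and in particular is independent of the ordering. -/

import Mathlib

open Matrix BigOperators Polynomial

/-- The principal submatrix of `M` obtained by deleting the rows and columns
indexed by the finite set `Δ`. -/
def mdel {V : Type*} [DecidableEq V] (M : Matrix V V ℝ) (Δ : Finset V) :
    Matrix {a // a ∉ Δ} {a // a ∉ Δ} ℝ :=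
  M.submatrix Subtype.val Subtype.val

/-- `Π_M`, the product of the nonzero eigenvalues of `M` (when `0` is an eigenvalue
of `M`): it equals `(-1)^{N-1}` times the coefficient of `λ` in the characteristic
polynomial of `M`. -/
noncomputable def prodNZ {V : Type*} [Fintype V] [DecidableEq V]
    (M : Matrix V V ℝ) : ℝ :=
  (-1) ^ (Fintype.card V - 1) * (Matrix.charpoly M).coeff 1

section aux
variable {V : Type*} [Fintype V] [DecidableEq V]

lemma adjugate_diag_eq (M : Matrix V V ℝ) (v : V) :
    M.adjugate v v = (mdel M {v}).det := by
  obtain ⟨k, hk⟩ : ∃ k, Fintype.card V = k + 1 :=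
    ⟨Fintype.card V - 1, (Nat.succ_pred_eq_of_pos (Fintype.card_pos_iff.mpr ⟨v⟩)).symm⟩
  let f : Fin (k + 1) ≃ V := (Fintype.equivFinOfCardEq hk).symm
  set i := f.symm v with hi
  have h1 : M.adjugate v v = (M.submatrix f f).adjugate i i := by
    rw [adjugate_submatrix_equiv_self]
    simp [i, submatrix_apply]
  have hv : ∀ j : Fin k, f (i.succAbove j) ∉ ({v} : Finset V) := by
    intro j
    simp only [Finset.mem_singleton]
    intro h
    exact Fin.succAbove_ne i j (f.injective (h.trans (by simp [i])))
  have hinj : Function.Injective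
      (fun j : Fin k => (⟨f (i.succAbove j), hv j⟩ : {a // a ∉ ({v} : Finset V)})) := by
    intro a b hab
    exact Fin.succAbove_right_injective (f.injective (congrArg Subtype.val hab))
  have hsurj : Function.Surjective
      (fun j : Fin k => (⟨f (i.succAbove j), hv j⟩ : {a // a ∉ ({v} : Finset V)})) := by
    rintro ⟨a, ha⟩
    have hne : f.symm a ≠ i := by
      intro h
      apply ha
      simp only [Finset.mem_singleton]
      have := congrArg f h
      simpa [i] using this
    obtain ⟨j, hj⟩ := Fin.exists_succAbove_eq hne
    exact ⟨j, by simp [hj]⟩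
  let ε : Fin k ≃ {a // a ∉ ({v} : Finset V)} := Equiv.ofBijective _ ⟨hinj, hsurj⟩
  rw [h1, adjugate_fin_succ_eq_det_submatrix, ← Matrix.det_submatrix_equiv_self ε (mdel M {v})]
  have hsign : (-1 : ℝ) ^ ((i : ℕ) + (i : ℕ)) = 1 := by
    rw [← two_mul, pow_mul]; norm_num
  rw [hsign, one_mul]
  rfl

lemma mdel_mdel (M : Matrix V V ℝ) (Δ : Finset V) (x : {a // a ∉ Δ}) :
    (mdel (mdel M Δ) {x}).det = (mdel M (insert x.1 Δ)).det := by
  have hto : ∀ s : {s : {a // a ∉ Δ} // s ∉ ({x} : Finset {a // a ∉ Δ})},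
      s.1.1 ∉ insert x.1 Δ := by
    rintro ⟨⟨a, ha⟩, hs⟩
    simp only [Finset.mem_singleton] at hs
    simp only [Finset.mem_insert]
    rintro (h | h)
    · exact hs (Subtype.ext h)
    · exact ha h
  let ε : {s : {a // a ∉ Δ} // s ∉ ({x} : Finset {a // a ∉ Δ})} ≃ {a // a ∉ insert x.1 Δ} :=
    { toFun := fun s => ⟨s.1.1, hto s⟩
      invFun := fun a => ⟨⟨a.1, fun h => a.2 (Finset.mem_insert_of_mem h)⟩, by
        simp only [Finset.mem_singleton]
        intro h
        have hax : a.1 = x.1 := congrArg Subtype.val h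
        exact a.2 (by rw [Finset.mem_insert]; exact Or.inl hax)⟩
      left_inv := fun s => Subtype.ext (Subtype.ext rfl)
      right_inv := fun a => rfl }
  rw [← Matrix.det_submatrix_equiv_self ε (mdel M (insert x.1 Δ))]
  rfl

lemma inv_diag (M : Matrix V V ℝ) (h : IsUnit M.det) (x : V) :
    M⁻¹ x x = (mdel M {x}).det / M.det := by
  rw [Matrix.inv_def]
  simp [Matrix.smul_apply, Ring.inverse_eq_inv', adjugate_diag_eq, div_eq_inv_mul]

lemma coeff1_of_invertible (A : Matrix V V ℝ) (h : IsUnit A.det) :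
    (Matrix.charpoly A).coeff 1
      = (-1) ^ (Fintype.card V - 1) * Matrix.trace (Matrix.adjugate A) := by
  cases isEmpty_or_nonempty V
  · simp [Matrix.charpoly, Matrix.det_isEmpty, Matrix.trace, coeff_one]
  have hd : A.det ≠ 0 := by
    intro h0; rw [h0] at h; exact (not_isUnit_zero h)
  have hAinv : A * A⁻¹ = 1 := Matrix.mul_nonsing_inv A h
  have key : charmatrix A = (-1 : Matrix V V ℝ[X]) * (A.map C * (1 - (X : ℝ[X]) • (A⁻¹).map C)) := by
    rw [Matrix.mul_sub, mul_one, Matrix.mul_smul, ← Matrix.map_mul, hAinv]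
    rw [charmatrix]
    ext i j
    by_cases hij : i = j <;>
      simp [hij, Matrix.map_one, Matrix.one_apply, Matrix.smul_apply, Matrix.sub_apply,
        Matrix.neg_mul, Matrix.neg_apply, smul_eq_mul, mul_comm]
  have hdet : Matrix.charpoly A
      = (-1 : ℝ[X]) ^ (Fintype.card V) * (C A.det * (1 + (X : ℝ[X]) • (-A⁻¹).map C).det) := by
    rw [Matrix.charpoly, key, Matrix.det_mul]
    congr 1
    · rw [show (-1 : Matrix V V ℝ[X]) = -(1 : Matrix V V ℝ[X]) from rfl, Matrix.det_neg,
        Matrix.det_one, mul_one]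
    · rw [Matrix.det_mul, RingHom.map_det]
      congr 2
      ext i j
      simp [Matrix.map_apply, Matrix.one_apply, sub_eq_add_neg, Matrix.neg_apply]
  have hc1 : ((1 + (X : ℝ[X]) • (-A⁻¹).map C).det).coeff 1 = Matrix.trace (-A⁻¹) :=
    Matrix.coeff_det_one_add_X_smul_one (-A⁻¹)
  have hadj : Matrix.adjugate A = A.det • A⁻¹ := by
    rw [Matrix.inv_def, smul_smul, Ring.inverse_eq_inv', mul_inv_cancel₀ hd, one_smul]
  have htr : Matrix.trace (Matrix.adjugate A) = A.det * Matrix.trace A⁻¹ := by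
    rw [hadj, Matrix.trace_smul, smul_eq_mul]
  obtain ⟨m, hm⟩ : ∃ m, Fintype.card V = m + 1 :=
    ⟨Fintype.card V - 1, (Nat.succ_pred_eq_of_pos Fintype.card_pos).symm⟩
  have hC : ((-1 : ℝ[X]) ^ (Fintype.card V)) = C ((-1 : ℝ) ^ (Fintype.card V)) := by
    simp [map_pow]
  rw [hdet, hC, coeff_C_mul, coeff_C_mul, hc1, Matrix.trace_neg, htr, hm]
  simp only [Nat.add_sub_cancel, pow_succ]
  ring

lemma coeff1_charpoly (A : Matrix V V ℝ) :
    (Matrix.charpoly A).coeff 1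
      = (-1) ^ (Fintype.card V - 1) * Matrix.trace (Matrix.adjugate A) := by
  set B : Matrix V V ℝ[X] := A.map C + (X : ℝ[X]) • 1 with hB
  have hmap : ∀ t : ℝ, B.map (evalRingHom t) = A + t • 1 := by
    intro t
    ext i j
    by_cases hij : i = j <;>
      simp [hB, Matrix.map_apply, Matrix.add_apply, Matrix.smul_apply, Matrix.one_apply, hij,
        mul_comm]
  set g : ℝ[X] := (Matrix.charpoly B).coeff 1
      - (-1 : ℝ[X]) ^ (Fintype.card V - 1) * Matrix.trace (Matrix.adjugate B) with hg
  have heval : ∀ t : ℝ, g.eval t =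
      (Matrix.charpoly (A + t • 1)).coeff 1
        - (-1) ^ (Fintype.card V - 1) * Matrix.trace (Matrix.adjugate (A + t • 1)) := by
    intro t
    have h1 : Matrix.charpoly (A + t • 1) = (Matrix.charpoly B).map (evalRingHom t) := by
      rw [← hmap t, Matrix.charpoly_map]
    have h2 : Matrix.adjugate (A + t • 1) = (Matrix.adjugate B).map (evalRingHom t) := by
      rw [← hmap t]
      have := RingHom.map_adjugate (evalRingHom t) B
      simpa [RingHom.mapMatrix_apply] using this.symm
    have h3 : Matrix.trace ((Matrix.adjugate B).map (evalRingHom t))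
        = eval t (Matrix.trace (Matrix.adjugate B)) := by
      simp [Matrix.trace, Matrix.diag, Matrix.map_apply, eval_finset_sum]
    rw [h1, coeff_map, h2, h3, hg]
    simp
  have hdetB : ∀ t : ℝ, eval t B.det = (A + t • 1).det := by
    intro t
    rw [← hmap t]
    have := RingHom.map_det (evalRingHom t) B
    simpa [RingHom.mapMatrix_apply, coe_evalRingHom] using this
  have hBq : B.det = Matrix.charpoly (-A) := by
    unfold Matrix.charpoly
    congr 1
    ext i j
    by_cases hij : i = j
    · subst hij; rw [charmatrix_apply_eq]; simp [hB, add_comm]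
    · rw [charmatrix_apply_ne _ _ _ hij]; simp [hB, Matrix.one_apply, hij]
  have hgz : g = 0 := by
    by_contra hne
    have hfin1 : Set.Finite {t : ℝ | IsRoot g t} := Polynomial.finite_setOf_isRoot hne
    have hfin2 : Set.Finite {t : ℝ | IsRoot B.det t} :=
      Polynomial.finite_setOf_isRoot (by rw [hBq]; exact (Matrix.charpoly_monic (-A)).ne_zero)
    have hcover : (Set.univ : Set ℝ) ⊆ {t : ℝ | IsRoot g t} ∪ {t : ℝ | IsRoot B.det t} := by
      intro t _
      by_cases hdet : (A + t • 1).det = 0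
      · right
        simpa [IsRoot, hdetB t] using hdet
      · left
        have := coeff1_of_invertible (A + t • 1) (isUnit_iff_ne_zero.mpr hdet)
        simp only [Set.mem_setOf_eq, IsRoot, heval t, this, sub_self]
    exact Set.infinite_univ (Set.Finite.subset (hfin1.union hfin2) hcover)
  have h0 := heval 0
  rw [hgz] at h0
  simp only [eval_zero, zero_smul, add_zero] at h0
  linarith [h0]

end aux

section lap
variable {V : Type*} [Fintype V] [DecidableEq V]
variable (G : SimpleGraph V) [DecidableRel G.Adj]

lemma sum_vanish {Δ : Finset V} (u : V → ℝ) (hu : ∀ v ∈ Δ, u v = 0) :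
    ∑ v : V, u v = ∑ v : {a // a ∉ Δ}, u v := by
  rw [← Finset.sum_subtype (Finset.univ.filter (· ∉ Δ)) (by simp) u]
  exact (Finset.sum_subset (Finset.filter_subset _ _)
    (fun v _ hv => hu v (by simpa using hv))).symm

lemma posDef_mdel (hG : G.Connected) (Δ : Finset V) (hΔ : Δ.Nonempty) :
    (mdel (G.lapMatrix ℝ) Δ).PosDef := by
  set L := G.lapMatrix ℝ with hL
  refine Matrix.PosDef.of_dotProduct_mulVec_pos ?_ ?_
  · ext a b
    simp only [conjTranspose_apply, mdel, submatrix_apply, star_trivial]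
    exact congrFun (congrFun (SimpleGraph.isSymm_lapMatrix ℝ G) a.1) b.1
  · intro x hx
    set y : V → ℝ := fun v => if h : v ∈ Δ then 0 else x ⟨v, h⟩ with hy
    have hy0 : ∀ v ∈ Δ, y v = 0 := fun v hv => dif_pos hv
    have hyx : ∀ a : {a // a ∉ Δ}, y a.1 = x a := fun a => dif_neg a.2
    have key : star x ⬝ᵥ (mdel L Δ) *ᵥ x = y ⬝ᵥ L *ᵥ y := by
      simp only [star_trivial, dotProduct, mulVec]
      rw [sum_vanish (fun v => y v * ∑ w : V, L v w * y w)
        (fun v hv => by simp [hy0 v hv])]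
      refine Finset.sum_congr rfl fun a _ => ?_
      rw [hyx a]
      congr 1
      rw [sum_vanish (fun w => L a.1 w * y w) (fun w hw => by simp [hy0 w hw])]
      exact Finset.sum_congr rfl fun b _ => by rw [hyx b]; rfl
    rw [key]
    have hle : 0 ≤ y ⬝ᵥ L *ᵥ y := by
      have := (SimpleGraph.posSemidef_lapMatrix ℝ G).dotProduct_mulVec_nonneg y
      simpa using this
    rcases lt_or_eq_of_le hle with h | h
    · exact h
    · exfalso
      have hz : Matrix.toLinearMap₂' ℝ (G.lapMatrix ℝ) y y = 0 := by
        rw [Matrix.toLinearMap₂'_apply']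
        exact h.symm
      rw [SimpleGraph.lapMatrix_toLinearMap₂'_apply'_eq_zero_iff_forall_reachable] at hz
      obtain ⟨d, hd⟩ := hΔ
      obtain ⟨a, ha⟩ := Function.ne_iff.mp hx
      have : y a.1 = y d := hz a.1 d (hG.preconnected a.1 d)
      rw [hyx a, hy0 d hd] at this
      exact ha this

lemma lap_det_zero [Nonempty V] : (G.lapMatrix ℝ).det = 0 := by
  rw [← Matrix.exists_mulVec_eq_zero_iff]
  exact ⟨fun _ => 1, by simp [funext_iff], G.lapMatrix_mulVec_const_eq_zero⟩

lemma adjugate_lap_const (hG : G.Connected) (v w : V) :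
    (G.lapMatrix ℝ).adjugate v v = (G.lapMatrix ℝ).adjugate w w := by
  have : Nonempty V := ⟨v⟩
  set L := G.lapMatrix ℝ with hL
  set Adj := L.adjugate with hAdj
  have h1 : L * Adj = 0 := by rw [hAdj, Matrix.mul_adjugate, lap_det_zero G, zero_smul]
  have h2 : Adj * L = 0 := by rw [hAdj, Matrix.adjugate_mul, lap_det_zero G, zero_smul]
  have hcol : ∀ j a b : V, Adj a j = Adj b j := by
    intro j a b
    have hker : Matrix.toLin' L (fun k => Adj k j) = 0 := by
      ext c
      have : (L * Adj) c j = 0 := by rw [h1]; rfl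
      simpa [Matrix.toLin'_apply, Matrix.mulVec, dotProduct, Matrix.mul_apply] using this
    rw [Matrix.toLin'_apply, hL, SimpleGraph.lapMatrix_mulVec_eq_zero_iff_forall_reachable] at hker
    exact hker a b (hG.preconnected a b)
  have hrow : ∀ i a b : V, Adj i a = Adj i b := by
    intro i a b
    have hker : Matrix.toLin' L (fun k => Adj i k) = 0 := by
      ext c
      have h0 : (Adj * L) i c = 0 := by rw [h2]; rfl
      have hsym : ∀ p q : V, L q p = L p q :=
        fun p q => congrFun (congrFun (SimpleGraph.isSymm_lapMatrix ℝ G) p) q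
      rw [Matrix.mul_apply] at h0
      simp only [Matrix.toLin'_apply, Matrix.mulVec, dotProduct, Pi.zero_apply]
      rw [← h0]
      exact Finset.sum_congr rfl fun k _ => by rw [hsym c k]; ring
    rw [Matrix.toLin'_apply, hL, SimpleGraph.lapMatrix_mulVec_eq_zero_iff_forall_reachable] at hker
    exact hker a b (hG.preconnected a b)
  calc Adj v v = Adj w v := hcol v v w
    _ = Adj w w := hrow w v w

end lap

lemma tele (h : ℕ → ℝ) : ∀ N : ℕ, (∀ j, j ≤ N → h j ≠ 0) →
    ∏ i ∈ Finset.range N, (h (i + 1) / h i) = h N / h 0 := by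
  intro N
  induction N with
  | zero => intro hne; simp [div_self (hne 0 (Nat.le_refl 0))]
  | succ k ih =>
    intro hne
    rw [Finset.prod_range_succ, ih (fun j hj => hne j (hj.trans (Nat.le_succ _)))]
    have h1 := hne k (Nat.le_succ _)
    have h2 := hne 0 (Nat.zero_le _)
    field_simp

theorem stmt15 {V : Type*} [Fintype V] [DecidableEq V]
    (G : SimpleGraph V) [DecidableRel G.Adj] (hG : G.Connected)
    (n : ℕ) (hn : Fintype.card V = n + 1) (e : Fin (n + 1) ≃ V) :
    (∏ m ∈ Finset.univ.filter (fun m : Fin (n + 1) => m ≠ 0),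
        ((mdel (G.lapMatrix ℝ) ((Finset.Iio m).image e))⁻¹
          ⟨e m, by simp⟩ ⟨e m, by simp⟩))
      = 1 / (mdel (G.lapMatrix ℝ) {e 0}).det ∧
    (∏ m ∈ Finset.univ.filter (fun m : Fin (n + 1) => m ≠ 0),
        ((mdel (G.lapMatrix ℝ) ((Finset.Iio m).image e))⁻¹
          ⟨e m, by simp⟩ ⟨e m, by simp⟩))
      = Fintype.card V / prodNZ (G.lapMatrix ℝ) := by
  have hV : Nonempty V := ⟨e 0⟩
  set L := G.lapMatrix ℝ with hL
  set D : ℕ → Finset V := fun k => Finset.univ.filter (fun v => ((e.symm v : Fin (n+1)) : ℕ) < k)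
    with hD
  have hprod : (∏ m ∈ Finset.univ.filter (fun m : Fin (n + 1) => m ≠ 0),
        ((mdel L ((Finset.Iio m).image e))⁻¹ ⟨e m, by simp⟩ ⟨e m, by simp⟩))
      = ∏ m ∈ Finset.univ.filter (fun m : Fin (n + 1) => m ≠ 0),
        ((mdel L (D (m.val + 1))).det / (mdel L (D m.val)).det) := by
    have hD0 : ∀ m : Fin (n + 1), (Finset.Iio m).image e = D m.val := by
      intro m; ext v
      rw [hD]
      simp only [Finset.mem_image, Finset.mem_Iio, Finset.mem_filter, Finset.mem_univ, true_and]
      constructor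
      · rintro ⟨i, hi, rfl⟩
        rw [Equiv.symm_apply_apply]
        exact hi
      · intro h
        exact ⟨e.symm v, h, by rw [Equiv.apply_symm_apply]⟩
    have hins : ∀ m : Fin (n + 1), insert (e m) (D m.val) = D (m.val + 1) := by
      intro m; ext v
      simp only [hD, Finset.mem_insert, Finset.mem_filter, Finset.mem_univ, true_and]
      constructor
      · rintro (rfl | h)
        · simp [Nat.lt_succ_iff]
        · exact h.trans (Nat.lt_succ_self _)
      · intro h
        rcases Nat.lt_succ_iff_lt_or_eq.mp h with h | h
        · right; exact h
        · left
          have hv : e.symm v = m := Fin.ext h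
          rw [← hv]; simp
    have hfactor : ∀ (Δ : Finset V) (hΔ : Δ.Nonempty) (v : V) (hv : v ∉ Δ),
        (mdel L Δ)⁻¹ ⟨v, hv⟩ ⟨v, hv⟩ = (mdel L (insert v Δ)).det / (mdel L Δ).det := by
      intro Δ hΔ v hv
      have hpd := posDef_mdel G hG Δ hΔ
      rw [inv_diag _ (isUnit_iff_ne_zero.mpr hpd.det_pos.ne'),
        mdel_mdel L Δ (⟨v, hv⟩ : {a // a ∉ Δ})]
    refine Finset.prod_congr rfl fun m hm => ?_
    have hm0 : m ≠ 0 := by simpa using hm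
    have h1 : ((Finset.Iio m).image e).Nonempty :=
      ⟨e 0, Finset.mem_image_of_mem e (Finset.mem_Iio.mpr (Fin.pos_of_ne_zero hm0))⟩
    rw [hfactor _ h1 (e m) (by simp), hD0 m, hins m]
  have hne : ∀ k, 0 < k → (D k).Nonempty := by
    intro k hk
    exact ⟨e 0, by simp [hD, hk]⟩
  have hdetpos : ∀ k, 0 < k → 0 < (mdel L (D k)).det := fun k hk =>
    (posDef_mdel G hG (D k) (hne k hk)).det_pos
  have hreindex : ∀ F : Fin (n + 1) → ℝ,
      ∏ m ∈ Finset.univ.filter (fun m : Fin (n + 1) => m ≠ 0), F m = ∏ i : Fin n, F i.succ := by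
    intro F
    refine Finset.prod_bij' (fun m hm => m.pred (by simpa using hm)) (fun i _ => i.succ)
      (fun a ha => Finset.mem_univ _) (fun i _ => by simp [Fin.succ_ne_zero])
      (fun m hm => Fin.succ_pred _ _) (fun i _ => Fin.pred_succ _) ?_
    intro m hm
    rw [Fin.succ_pred]
  set h : ℕ → ℝ := fun k => (mdel L (D (k + 1))).det with hh
  have hfin : ∏ i : Fin n, ((mdel L (D (i.succ.val + 1))).det / (mdel L (D i.succ.val)).det)
      = ∏ i ∈ Finset.range n, (h (i + 1) / h i) := by
    rw [← Fin.prod_univ_eq_prod_range (fun i => h (i + 1) / h i) n]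
    exact Finset.prod_congr rfl fun i _ => by rw [Fin.val_succ]
  have hne' : ∀ j, j ≤ n → h j ≠ 0 := fun j _ => (hdetpos (j + 1) (Nat.succ_pos _)).ne'
  have hlast : h n = 1 := by
    have hEmp : IsEmpty {a // a ∉ D (n + 1)} := by
      refine ⟨fun a => a.2 ?_⟩
      simp only [hD, Finset.mem_filter, Finset.mem_univ, true_and]
      exact (e.symm a.1).isLt
    exact Matrix.det_isEmpty
  have hD1 : D 1 = {e 0} := by
    ext v
    simp only [hD, Finset.mem_filter, Finset.mem_univ, true_and, Finset.mem_singleton,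
      Nat.lt_one_iff]
    constructor
    · intro hv
      have h0 : e.symm v = 0 := Fin.ext (by simpa using hv)
      rw [← h0, Equiv.apply_symm_apply]
    · rintro rfl; simp
  have hmain2 : (∏ m ∈ Finset.univ.filter (fun m : Fin (n + 1) => m ≠ 0),
        ((mdel L (D (m.val + 1))).det / (mdel L (D m.val)).det))
      = 1 / (mdel L {e 0}).det := by
    rw [hreindex (fun m => (mdel L (D (m.val + 1))).det / (mdel L (D m.val)).det), hfin,
      tele h n hne', hlast]
    show (1 : ℝ) / (mdel L (D 1)).det = _
    rw [hD1]
  have hmain := hprod.trans hmain2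
  have hd0 : 0 < (mdel L {e 0}).det := by
    rw [← hD1]; exact hdetpos 1 one_pos
  refine ⟨hmain, hmain.trans ?_⟩
  have hPZ : prodNZ L = (n + 1) * (mdel L {e 0}).det := by
    unfold prodNZ
    rw [coeff1_charpoly L, ← mul_assoc, ← pow_add]
    have heven : Even (Fintype.card V - 1 + (Fintype.card V - 1)) := ⟨_, rfl⟩
    rw [heven.neg_one_pow, one_mul]
    have htr : Matrix.trace (Matrix.adjugate L) = ∑ v : V, L.adjugate v v := rfl
    rw [htr]
    have : ∀ v : V, L.adjugate v v = (mdel L {e 0}).det := fun v => by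
      rw [adjugate_lap_const G hG v (e 0), adjugate_diag_eq]
    rw [Finset.sum_congr rfl fun v _ => this v, Finset.sum_const, Finset.card_univ, hn,
      nsmul_eq_mul]
    push_cast
    ring
  rw [hPZ, hn]
  push_cast
  rw [div_eq_div_iff hd0.ne' (by positivity)]
  ring
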